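/- Let k be a field and let N ≥ 1 and M ≥ 0 be integers. Then there exist finitely many functors F_1, …, F_t from the linearly ordered set Fin N (viewed as a category) to k-vector spaces such that every functor F : Fin N → Vect_k with dim F(i) ≤ M for all i is naturally isomorphic to some F_s. In other words, the functors Fin N → Vect_k with all pointwise dimensions at most M fall into finitely many isomorphism classes. -/

import Mathlib

open CategoryTheory

open Submodule
open Module
variable {k : Type} [Field k]
lemma exists_adapted_basis (m : ℕ) :
    ∀ (V : Type) [AddCommGroup V] [Module k V] [FiniteDimensional k V]
      (S : ℕ → Submodule k V), Monotone S → S m = ⊤ →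
    ∃ (ι : Type) (_ : Fintype ι) (B : Basis ι k V) (lvl : ι → ℕ),
      (∀ x, lvl x ≤ m) ∧ ∀ j, S j = Submodule.span k (⇑B '' {x | lvl x ≤ j}) := by
  induction m with
  | zero =>
      intro V _ _ _ S hmono htop
      have hall : ∀ j, S j = ⊤ := fun j => top_le_iff.mp (htop ▸ hmono (Nat.zero_le j))
      refine ⟨Fin (Module.finrank k V), inferInstance, Module.finBasis k V, fun _ => 0,
        fun _ => le_refl _, fun j => ?_⟩
      rw [hall j]
      have : {x : Fin (Module.finrank k V) | 0 ≤ j} = Set.univ := by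
        ext x; simp
      rw [this, Set.image_univ, Basis.span_eq]
  | succ m ih =>
      intro V _ _ _ S hmono htop
      set W : Submodule k V := S m with hW
      obtain ⟨ι₁, _, B₁, lvl₁, hlvl₁, hspan₁⟩ :=
        ih W (fun j => (S j).comap W.subtype) (fun a b hab => comap_mono (hmono hab))
          (comap_subtype_self W)
      obtain ⟨C, hC⟩ := Submodule.exists_isCompl W
      let B₂ : Basis (Fin (Module.finrank k C)) k C := Module.finBasis k C
      let e : (W × C) ≃ₗ[k] V := Submodule.prodEquivOfIsCompl W C hC
      let B : Basis (ι₁ ⊕ Fin (Module.finrank k C)) k V := (B₁.prod B₂).map e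
      have hBl : ∀ x : ι₁, B (Sum.inl x) = (B₁ x : V) := by
        intro x
        simp [B, e, Basis.prod_apply, Submodule.coe_prodEquivOfIsCompl]
      have hBr : ∀ y, B (Sum.inr y) = (B₂ y : V) := by
        intro y
        simp [B, e, Basis.prod_apply, Submodule.coe_prodEquivOfIsCompl]
      refine ⟨_, inferInstance, B, Sum.elim lvl₁ (fun _ => m + 1), ?_, ?_⟩
      · rintro (x | y)
        · exact le_trans (hlvl₁ x) (Nat.le_succ m)
        · exact le_refl _
      · intro j
        by_cases hj : j ≤ m
        · -- S j ≤ W, only inl vectors appear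
          have hset : {x : ι₁ ⊕ Fin (Module.finrank k C) | Sum.elim lvl₁ (fun _ => m + 1) x ≤ j}
              = Sum.inl '' {x | lvl₁ x ≤ j} := by
            ext (x | y) <;> simp [hj] <;> omega
          rw [hset, Set.image_image]
          have himg : (fun x => B (Sum.inl x)) '' {x | lvl₁ x ≤ j}
              = ⇑W.subtype '' (⇑B₁ '' {x | lvl₁ x ≤ j}) := by
            rw [Set.image_image]
            exact Set.image_congr (fun x _ => hBl x)
          rw [himg, ← Submodule.map_span, ← hspan₁ j, map_comap_subtype]
          exact (inf_eq_right.mpr (hmono hj)).symm ▸ (inf_eq_right.mpr (hmono hj))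
        · -- S j = ⊤ and all levels qualify
          have hjt : S j = ⊤ := top_le_iff.mp (htop ▸ hmono (by omega : m + 1 ≤ j))
          have hset : {x : ι₁ ⊕ Fin (Module.finrank k C) | Sum.elim lvl₁ (fun _ => m + 1) x ≤ j}
              = Set.univ := by
            ext (x | y) <;> simp <;> [exact le_trans (hlvl₁ x) (by omega); omega]
          rw [hjt, hset, Set.image_univ, Basis.span_eq]

lemma exists_matching_bases (n : ℕ) :
    ∀ (V : Fin (n+1) → Type) [∀ i, AddCommGroup (V i)] [∀ i, Module k (V i)]
      [∀ i, FiniteDimensional k (V i)]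
      (f : ∀ i : Fin n, V i.castSucc →ₗ[k] V i.succ) (m : ℕ)
      (S : ℕ → Submodule k (V 0)), Monotone S → S m = ⊤ →
    ∃ (ι : Fin (n+1) → Type) (_ : ∀ i, Fintype (ι i)) (B : ∀ i, Basis (ι i) k (V i))
      (σ : ∀ i : Fin n, ι i.castSucc → Option (ι i.succ)) (lvl : ι 0 → ℕ),
      (∀ (i : Fin n) (x : ι i.castSucc),
        f i (B i.castSucc x) = Option.elim (σ i x) 0 (fun y => B i.succ y)) ∧
      (∀ x, lvl x ≤ m) ∧
      (∀ j, S j = Submodule.span k (⇑(B 0) '' {x | lvl x ≤ j})) := by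
  induction n with
  | zero =>
      intro V _ _ _ f m S hmono htop
      obtain ⟨ι₀, ft₀, B₀, lvl₀, hlvl₀, hspan₀⟩ := exists_adapted_basis m (V 0) S hmono htop
      refine ⟨fun _ => ι₀, fun _ => ft₀, fun i => Fin.cases B₀ (fun j => j.elim0) i,
        fun i => i.elim0, lvl₀, fun i => i.elim0, hlvl₀, ?_⟩
      exact hspan₀
  | succ n ih =>
      intro V _ _ _ f m S hmono htop
      set f₀ : V 0 →ₗ[k] V ((0 : Fin (n+1)).succ) := f 0 with hf₀
      set K := LinearMap.ker f₀ with hK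
      -- flag on V 1
      set T : ℕ → Submodule k (V (0 : Fin (n+1)).succ) :=
        fun j => if j ≤ m then Submodule.map f₀ (S j) else ⊤ with hT
      have hTmono : Monotone T := by
        intro a b hab
        by_cases ha : a ≤ m
        · by_cases hb : b ≤ m
          · simp only [hT, if_pos ha, if_pos hb]; exact Submodule.map_mono (hmono hab)
          · simp only [hT, if_pos ha, if_neg hb]; exact le_top
        · have hb : ¬ b ≤ m := by omega
          simp only [hT, if_neg ha, if_neg hb]; exact le_refl _
      have hTtop : T (m + 1) = ⊤ := by simp [hT]
      obtain ⟨ι', ft', B', σ', lvl', hmatch', hlvl', hspan'⟩ :=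
        ih (fun i => V i.succ) (fun i => f i.succ) (m+1) T hTmono hTtop
      haveI := ft'
      -- preimages of the basis vectors of V 1 of level ≤ m
      set A := {x : ι' 0 // lvl' x ≤ m} with hA
      have hv : ∀ x : A, ∃ w, w ∈ S (lvl' x.1) ∧ f₀ w = B' 0 x.1 := by
        intro x
        have h1 : B' 0 x.1 ∈ T (lvl' x.1) := by
          rw [hspan' (lvl' x.1)]
          exact subset_span ⟨x.1, by simp, rfl⟩
        rw [hT] at h1
        simp only [if_pos x.2] at h1
        obtain ⟨w, hw, hfw⟩ := h1
        exact ⟨w, hw, hfw⟩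
      set v : A → V 0 := fun x => (hv x).choose with hvdef
      have hv1 : ∀ x : A, v x ∈ S (lvl' x.1) := fun x => (hv x).choose_spec.1
      have hv2 : ∀ x : A, f₀ (v x) = B' 0 x.1 := fun x => (hv x).choose_spec.2
      -- adapted basis of the kernel
      have hSKtop : comap (K.subtype : ↥K →ₗ[k] V 0) (S m) = ⊤ := by
        rw [htop]; exact eq_top_iff.mpr (fun x _ => trivial)
      obtain ⟨ιK, ftK, CB, lvlK, hlvlK, hspanK⟩ :=
        exists_adapted_basis m (↥K) (fun j => comap (K.subtype : ↥K →ₗ[k] V 0) (S j))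
          (fun a b hab x hx => hmono hab hx)
          hSKtop
      haveI := ftK
      -- the combined family
      set g : A ⊕ ιK → V 0 := Sum.elim v (fun y => (CB y : V 0)) with hg
      have hcomp : ⇑f₀ ∘ v = ⇑(B' 0) ∘ (Subtype.val : A → ι' 0) := funext fun x => hv2 x
      have hLIrestr : LinearIndependent k (⇑(B' 0) ∘ (Subtype.val : A → ι' 0)) :=
        (B' 0).linearIndependent.comp _ Subtype.val_injective
      have hLIv : LinearIndependent k v :=
        LinearIndependent.of_comp f₀ (by rw [hcomp]; exact hLIrestr)
      have hLIC : LinearIndependent k (fun y : ιK => (CB y : V 0)) :=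
        CB.linearIndependent.map' K.subtype (ker_subtype _)
      have hspanC : span k (Set.range fun y : ιK => (CB y : V 0)) = K := by
        have h1 : (Set.range fun y : ιK => (CB y : V 0)) = ⇑K.subtype '' Set.range ⇑CB := by
          rw [← Set.range_comp]; rfl
        rw [h1, ← Submodule.map_span, CB.span_eq, map_subtype_top]
      have hdisj : Disjoint (span k (Set.range v))
          (span k (Set.range fun y : ιK => (CB y : V 0))) := by
        rw [hspanC, disjoint_def]
        intro u hu huK
        obtain ⟨c, hc⟩ := (mem_span_range_iff_exists_fun k).mp hu
        have h0 : ∑ x : A, c x • (B' 0 x.1) = 0 := by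
          have he : f₀ (∑ x : A, c x • v x) = ∑ x : A, c x • (B' 0 x.1) := by
            rw [map_sum]; exact Finset.sum_congr rfl (fun x _ => by rw [map_smul, hv2])
          rw [← he, hc]
          exact huK
        have hz : ∀ x : A, c x = 0 :=
          Fintype.linearIndependent_iff.mp hLIrestr c (by simpa using h0)
        rw [← hc]
        simp [hz]
      have hLI : LinearIndependent k g := hLIv.sum_type hLIC hdisj
      have hKle : K ≤ span k (Set.range g) := by
        rw [← hspanC]
        refine span_mono ?_
        rintro _ ⟨y, rfl⟩
        exact ⟨Sum.inr y, rfl⟩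
      have hsp : ⊤ ≤ span k (Set.range g) := by
        intro u _
        have h1 : f₀ u ∈ T m := by
          rw [hT]
          simp only [if_pos (le_refl m)]
          exact ⟨u, by rw [htop]; trivial, rfl⟩
        rw [hspan' m, Set.image_eq_range] at h1
        obtain ⟨c, hc⟩ := (mem_span_range_iff_exists_fun k).mp h1
        set u' : V 0 := ∑ x : A, c x • v x with hu'
        have hker : u - u' ∈ K := by
          have he : f₀ u' = ∑ x : A, c x • (B' 0 x.1) := by
            rw [hu', map_sum]; exact Finset.sum_congr rfl (fun x _ => by rw [map_smul, hv2])
          have : f₀ (u - u') = 0 := by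
            rw [map_sub, he, ← hc]
            exact sub_self _
          exact this
        have h2 : u' ∈ span k (Set.range g) :=
          sum_mem fun x _ => smul_mem _ _ (subset_span ⟨Sum.inl x, rfl⟩)
        have h3 : u - u' ∈ span k (Set.range g) := hKle hker
        simpa using add_mem h2 h3
      set B₀ : Basis (A ⊕ ιK) k (V 0) := Basis.mk hLI hsp with hB₀
      have hB₀l : ∀ a : A, B₀ (Sum.inl a) = v a := fun a => Basis.mk_apply hLI hsp (Sum.inl a)
      have hB₀r : ∀ y : ιK, B₀ (Sum.inr y) = (CB y : V 0) :=
        fun y => Basis.mk_apply hLI hsp (Sum.inr y)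
      refine ⟨fun i => Fin.cases (A ⊕ ιK) ι' i, ?_, ?_, ?_, ?_, ?_, ?_, ?_⟩
      · exact fun i => Fin.cases (inferInstanceAs (Fintype (A ⊕ ιK))) ft' i
      · exact fun i => Fin.cases B₀ B' i
      · exact fun i => Fin.cases (Sum.elim (fun x : A => some x.1) (fun _ => none)) σ' i
      · exact Sum.elim (fun x : A => lvl' x.1) lvlK
      · -- matching
        intro i
        refine Fin.cases ?_ ?_ i
        · rintro (a | y)
          · show f₀ (B₀ (Sum.inl a)) = (B' 0) a.1
            rw [hB₀l]
            exact hv2 a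
          · show f₀ (B₀ (Sum.inr y)) = 0
            rw [hB₀r]
            exact (CB y).2
        · intro j x
          exact hmatch' j x
      · rintro (a | y)
        · exact a.2
        · exact hlvlK y
      · -- the flag condition
        intro j
        show S j = span k (⇑B₀ '' {y : A ⊕ ιK | Sum.elim (fun x : A => lvl' x.1) lvlK y ≤ j})
        by_cases hj : m ≤ j
        · have hSj : S j = ⊤ := top_le_iff.mp (htop ▸ hmono hj)
          have hset : {y : A ⊕ ιK | Sum.elim (fun x => lvl' x.1) lvlK y ≤ j} = Set.univ := by
            ext y
            simp only [Set.mem_setOf_eq, Set.mem_univ, iff_true]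
            cases y with
            | inl a => exact le_trans a.2 hj
            | inr z => exact le_trans (hlvlK z) hj
          rw [hSj, hset, Set.image_univ]
          exact (Basis.span_eq B₀).symm
        · push_neg at hj
          have hjm : j ≤ m := le_of_lt hj
          apply le_antisymm
          · -- S j ≤ span
            intro u hu
            have h1 : f₀ u ∈ T j := by
              rw [hT]
              simp only [if_pos hjm]
              exact mem_map_of_mem hu
            rw [hspan' j, Set.image_eq_range] at h1
            obtain ⟨c, hc⟩ := (mem_span_range_iff_exists_fun k).mp h1
            set ao : {x : ι' 0 // lvl' x ≤ j} → A := fun x => ⟨x.1, le_trans x.2 hjm⟩ with hao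
            set u' : V 0 := ∑ x : {x : ι' 0 // lvl' x ≤ j}, c x • v (ao x) with hu'
            have hu'span : u' ∈ span k (⇑B₀ '' {y | Sum.elim (fun x => lvl' x.1) lvlK y ≤ j}) := by
              refine sum_mem fun x _ => smul_mem _ _ (subset_span ⟨Sum.inl (ao x), x.2, hB₀l (ao x)⟩)
            have hu'S : u' ∈ S j :=
              sum_mem fun x _ => smul_mem _ _ (hmono x.2 (hv1 (ao x)))
            have hker : u - u' ∈ K := by
              have he : f₀ u' = ∑ x : {x : ι' 0 // lvl' x ≤ j}, c x • (B' 0 x.1) := by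
                rw [hu', map_sum]
                exact Finset.sum_congr rfl (fun x _ => by rw [map_smul, hv2 (ao x)])
              have : f₀ (u - u') = 0 := by
                rw [map_sub, he, ← hc]
                exact sub_self _
              exact this
            have hz : (⟨u - u', hker⟩ : K) ∈ comap K.subtype (S j) := by
              exact sub_mem hu hu'S
            rw [hspanK j] at hz
            have h5 : (u - u') ∈ span k (⇑K.subtype '' (⇑CB '' {z | lvlK z ≤ j})) := by
              rw [← Submodule.map_span]
              exact mem_map_of_mem hz
            have h6 : ⇑K.subtype '' (⇑CB '' {z | lvlK z ≤ j})
                ⊆ ⇑B₀ '' {y | Sum.elim (fun x => lvl' x.1) lvlK y ≤ j} := by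
              rintro _ ⟨_, ⟨z', hz', rfl⟩, rfl⟩
              exact ⟨Sum.inr z', hz', hB₀r z'⟩
            have h7 : u - u' ∈ span k (⇑B₀ '' {y | Sum.elim (fun x => lvl' x.1) lvlK y ≤ j}) :=
              span_mono h6 h5
            have h8 := add_mem hu'span h7
            simpa using h8
          · -- span ≤ S j
            refine span_le.mpr ?_
            rintro _ ⟨y, hy, rfl⟩
            cases y with
            | inl a =>
                rw [hB₀l]
                exact hmono hy (hv1 a)
            | inr z =>
                rw [hB₀r]
                have hmem : CB z ∈ comap K.subtype (S (lvlK z)) := by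
                  rw [hspanK (lvlK z)]
                  exact subset_span ⟨z, by simp, rfl⟩
                exact hmono hy hmem

open CategoryTheory Submodule

section Aux
variable {k : Type} [Field k]

/-- The linear map `(Fin a → k) →ₗ (Fin b → k)` sending the `x`-th standard basis
vector to the `σ x`-th one (or `0`). -/
noncomputable def optMap {a b : ℕ} (σ : Fin a → Option (Fin b)) :
    (Fin a → k) →ₗ[k] (Fin b → k) :=
  (Pi.basisFun k (Fin a)).constr k (fun x => (σ x).elim 0 (fun y => Pi.basisFun k (Fin b) y))

lemma optMap_apply {a b : ℕ} (σ : Fin a → Option (Fin b)) (x : Fin a) :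
    optMap (k := k) σ (Pi.basisFun k (Fin a) x)
      = (σ x).elim 0 (fun y => Pi.basisFun k (Fin b) y) :=
  Basis.constr_basis _ _ _ _

/-- Index data for the "partial matching" functors: dimensions bounded by `M`
and a partial matching at each step. -/
def MatchIdx (n M : ℕ) : Type :=
  Σ d : Fin (n+1) → Fin (M+1), ∀ i : Fin n, Fin (d i.castSucc).val → Option (Fin (d i.succ).val)

noncomputable instance (n M : ℕ) : Fintype (MatchIdx n M) := by
  unfold MatchIdx
  infer_instance

/-- The matching functor associated to matching data. -/
noncomputable def matchFunctor (k : Type) [Field k] {n M : ℕ} (p : MatchIdx n M) :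
    ComposableArrows (ModuleCat.{0} k) n :=
  ComposableArrows.mkOfObjOfMapSucc (fun q => ModuleCat.of k (Fin (p.1 q).val → k))
    (fun i => ModuleCat.ofHom (optMap (p.2 i)))

lemma matchFunctor_map (k : Type) [Field k] {n M : ℕ} (p : MatchIdx n M) (i : ℕ)
    (hi : i < n) :
    (matchFunctor k p).map' i (i+1) = ModuleCat.ofHom (optMap (p.2 ⟨i, hi⟩)) :=
  ComposableArrows.mkOfObjOfMapSucc_map_succ _ _ i hi
end Aux

/-- Poset modules over the finite linear order `Fin N` whose values are all
finite dimensional of dimension at most `M` fall into finitely many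
isomorphism classes: there are finitely many functors `F₁, …, F_t` such that
every such functor is naturally isomorphic to some `F_s`. -/
theorem linear_poset_modules_finitely_many_iso_classes
    (k : Type) [Field k] (N M : ℕ) (hN : 1 ≤ N) :
    ∃ (t : ℕ) (Fs : Fin t → (Fin N ⥤ ModuleCat.{0} k)),
      ∀ F : Fin N ⥤ ModuleCat.{0} k,
        (∀ i : Fin N, FiniteDimensional k (F.obj i)) →
        (∀ i : Fin N, Module.finrank k (F.obj i) ≤ M) →
        ∃ s : Fin t, Nonempty (F ≅ Fs s) := by
  obtain ⟨n, rfl⟩ : ∃ n, N = n + 1 := ⟨N - 1, by omega⟩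
  classical
  refine ⟨Fintype.card (MatchIdx n M),
    fun s => (matchFunctor k ((Fintype.equivFin (MatchIdx n M)).symm s) :
      Fin (n+1) ⥤ ModuleCat.{0} k), ?_⟩
  intro F hFD hdim
  haveI := hFD
  obtain ⟨ι, ftι, B, σ, lvl, hmatch, -, -⟩ :=
    exists_matching_bases n (fun i => (F.obj i : Type))
      (fun i : Fin n =>
        show (F.obj i.castSucc : Type) →ₗ[k] (F.obj i.succ : Type) from
          (F.map (homOfLE i.castSucc_le_succ)).hom)
      0 (fun _ => ⊤) monotone_const rfl
  haveI := ftι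
  have hcard : ∀ q : Fin (n+1), Fintype.card (ι q) ≤ M := by
    intro q
    have h1 := Module.finrank_eq_card_basis (B q)
    have h2 := hdim q
    omega
  set d : Fin (n+1) → Fin (M+1) := fun q => ⟨Fintype.card (ι q), by have := hcard q; omega⟩
    with hd
  set eqf : ∀ q, ι q ≃ Fin (Fintype.card (ι q)) := fun q => Fintype.equivFin (ι q) with heqf
  set τ : ∀ i : Fin n, Fin (d i.castSucc).val → Option (Fin (d i.succ).val) :=
    fun i x => ((σ i) ((eqf i.castSucc).symm x)).map (eqf i.succ) with hτ
  set p : MatchIdx n M := ⟨d, τ⟩ with hp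
  refine ⟨Fintype.equivFin (MatchIdx n M) p, ⟨?_⟩⟩
  have hpp : (Fintype.equivFin (MatchIdx n M)).symm (Fintype.equivFin (MatchIdx n M) p) = p :=
    Equiv.symm_apply_apply _ _
  show F ≅ matchFunctor k ((Fintype.equivFin (MatchIdx n M)).symm
    ((Fintype.equivFin (MatchIdx n M)) p))
  rw [hpp]
  have h2 : ∀ (q : Fin (n+1)) (z : ι q),
      ((B q).reindex (eqf q)).equivFun (B q z)
        = Pi.basisFun k (Fin (Fintype.card (ι q))) (eqf q z) := by
    intro q z
    funext j
    rw [show B q z = (B q).reindex (eqf q) (eqf q z) from by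
      rw [Basis.reindex_apply, Equiv.symm_apply_apply]]
    rw [Basis.equivFun_self, Pi.basisFun_apply]
    simp [Pi.single_apply, eq_comm]
  refine ComposableArrows.isoMk
    (fun q => LinearEquiv.toModuleIso (((B q).reindex (eqf q)).equivFun)) ?_
  intro i hi
  rw [matchFunctor_map k p i hi]
  set i₀ : Fin n := ⟨i, hi⟩ with hi₀
  apply ModuleCat.hom_ext
  refine Basis.ext (B i₀.castSucc) (fun x => ?_)
  show ((B i₀.succ).reindex (eqf i₀.succ)).equivFun
      (F.map (homOfLE i₀.castSucc_le_succ) (B i₀.castSucc x))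
    = optMap (τ i₀) (((B i₀.castSucc).reindex (eqf i₀.castSucc)).equivFun (B i₀.castSucc x))
  have h1 : F.map (homOfLE i₀.castSucc_le_succ) (B i₀.castSucc x)
      = (σ i₀ x).elim 0 (fun y => B i₀.succ y) := hmatch i₀ x
  rw [h1, h2 i₀.castSucc x, optMap_apply]
  have h3 : τ i₀ (eqf i₀.castSucc x) = (σ i₀ x).map (eqf i₀.succ) := by
    simp [hτ]
  rw [h3]
  cases hσ : σ i₀ x with
  | none => simp
  | some y => simp [h2 i₀.succ y]
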